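/- Let 𝕍 carry a strict Lie 2-algebra structure given by skew-symmetric bilinear functor data F satisfying the Jacobi identity, with bracket [ξ,η] := ad_F(ξ)·η on V₀ ⊕ V₁, and let G_ad := {(ad_F(ξ), ξ) : ξ ∈ V₀ ⊕ V₁} be the corresponding Dirac structure of gl(𝕍) ⊕ 𝕍. Then the normalizer N_{G_ad} := {N ∈ End⁰ ⊕ End¹ : {N, l} ∈ G_ad for all l ∈ G_ad} is a sub-Lie 2-algebra of gl(𝕍), and N ∈ N_{G_ad} if and only if N is a derivation of the bracket: N·[ξ,η] = [N·ξ, η] + [ξ, N·η] for all ξ, η ∈ V₀ ⊕ V₁. -/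

import Mathlib

open LinearMap

noncomputable section

namespace Omni

variable {V₀ V₁ : Type*}
  [AddCommGroup V₀] [Module ℝ V₀] [AddCommGroup V₁] [Module ℝ V₁]

variable (d : V₁ →ₗ[ℝ] V₀)

/-- `End⁰`: pairs `(A₀, A₁)` of endomorphisms with `A₀ ∘ d = d ∘ A₁`. -/
def End0 : Submodule ℝ ((V₀ →ₗ[ℝ] V₀) × (V₁ →ₗ[ℝ] V₁)) where
  carrier := {A | A.1 ∘ₗ d = d ∘ₗ A.2}
  add_mem' := by
    intro a b ha hb
    simp only [Set.mem_setOf_eq] at *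
    simp [add_comp, comp_add, ha, hb]
  zero_mem' := by
    simp only [Set.mem_setOf_eq]
    simp
  smul_mem' := by
    intro c a ha
    simp only [Set.mem_setOf_eq] at *
    simp [smul_comp, comp_smul, ha]

lemma mem_End0 {A : (V₀ →ₗ[ℝ] V₀) × (V₁ →ₗ[ℝ] V₁)} :
    A ∈ End0 d ↔ A.1 ∘ₗ d = d ∘ₗ A.2 := Iff.rfl

/-- Morphism space of `gl(𝕍)`:  `End⁰ ⊕ End¹`. -/
abbrev Gl := ↥(End0 d) × (V₀ →ₗ[ℝ] V₁)

/-- Morphism space of the omni-Lie 2-algebra `gl(𝕍) ⊕ 𝕍`. -/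
abbrev E := Gl d × (V₀ × V₁)

/-- `δ : End¹ → End⁰`, `δφ = (d∘φ, φ∘d)`. -/
def δm (φ : V₀ →ₗ[ℝ] V₁) : End0 d :=
  ⟨(d ∘ₗ φ, φ ∘ₗ d), by
    rw [mem_End0]
    exact (comp_assoc _ _ _).symm⟩

/-- commutator bracket on `End⁰`. -/
def bkt0 (A B : End0 d) : End0 d :=
  ⟨(A.1.1 ∘ₗ B.1.1 - B.1.1 ∘ₗ A.1.1, A.1.2 ∘ₗ B.1.2 - B.1.2 ∘ₗ A.1.2), by
    have hA : A.1.1 ∘ₗ d = d ∘ₗ A.1.2 := A.2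
    have hB : B.1.1 ∘ₗ d = d ∘ₗ B.1.2 := B.2
    rw [mem_End0]
    have ha : ∀ x, A.1.1 (d x) = d (A.1.2 x) := fun x => LinearMap.congr_fun hA x
    have hb : ∀ x, B.1.1 (d x) = d (B.1.2 x) := fun x => LinearMap.congr_fun hB x
    ext m
    simp [ha, hb]⟩

/-- `[A,φ] = A₁ ∘ φ - φ ∘ A₀` for `A ∈ End⁰`, `φ ∈ End¹`. -/
def bktAφ (A : End0 d) (φ : V₀ →ₗ[ℝ] V₁) : V₀ →ₗ[ℝ] V₁ :=
  A.1.2 ∘ₗ φ - φ ∘ₗ A.1.1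

/-- `[φ,ψ]_δ = φ∘d∘ψ - ψ∘d∘φ`. -/
def bktδ (φ ψ : V₀ →ₗ[ℝ] V₁) : V₀ →ₗ[ℝ] V₁ :=
  φ ∘ₗ d ∘ₗ ψ - ψ ∘ₗ d ∘ₗ φ

/-- bracket on the morphism space `End⁰ ⊕ End¹` of `gl(𝕍)`. -/
def bkt (X Y : Gl d) : Gl d :=
  (bkt0 d X.1 Y.1, bktAφ d X.1 Y.2 - bktAφ d Y.1 X.2 + bktδ d X.2 Y.2)

/-- action of `gl(𝕍)` on `𝕍`:  `(A,φ)·(u,m) = (A₀u, A₁m + φ(u+dm))`. -/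
def act (X : Gl d) (ξ : V₀ × V₁) : V₀ × V₁ :=
  (X.1.1.1 ξ.1, X.1.1.2 ξ.2 + X.2 (ξ.1 + d ξ.2))

/-- the `𝕍`-valued pairing on `E`. -/
def pairE (e₁ e₂ : E d) : V₀ × V₁ :=
  (2⁻¹ : ℝ) • (act d e₁.1 e₂.2 + act d e₂.1 e₁.2)

/-- pairing at the level of objects. -/
def pairObj (x y : (End0 d) × V₀) : V₀ :=
  (2⁻¹ : ℝ) • (x.1.1.1 y.2 + y.1.1.1 x.2)

/-- the Courant bracket on `E`. -/
def courant (e₁ e₂ : E d) : E d :=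
  (bkt d e₁.1 e₂.1, (2⁻¹ : ℝ) • (act d e₁.1 e₂.2 - act d e₂.1 e₁.2))

/-- Courant bracket at the level of objects. -/
def courantObj (x y : (End0 d) × V₀) : (End0 d) × V₀ :=
  (bkt0 d x.1 y.1, (2⁻¹ : ℝ) • (x.1.1.1 y.2 - y.1.1.1 x.2))

/-- the Dorfman bracket on `E`. -/
def dorfman (e₁ e₂ : E d) : E d :=
  (bkt d e₁.1 e₂.1, act d e₁.1 e₂.2)

/-- source of a morphism of `gl(𝕍) ⊕ 𝕍`. -/
def sE (e : E d) : (End0 d) × V₀ := (e.1.1, e.2.1)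

/-- target of a morphism of `gl(𝕍) ⊕ 𝕍`. -/
def tE (e : E d) : (End0 d) × V₀ := (e.1.1 + δm d e.1.2, e.2.1 + d e.2.2)

/-- vertical composition of morphisms of `gl(𝕍) ⊕ 𝕍`. -/
def compE (e e' : E d) : E d := ((e.1.1, e.1.2 + e'.1.2), (e.2.1, e.2.2 + e'.2.2))

/-- vertical composition of morphisms of `𝕍`. -/
def compV (x y : V₀ × V₁) : V₀ × V₁ := (x.1, x.2 + y.2)

/-- orthogonal complement w.r.t. the `𝕍`-valued pairing. -/
def perp (L : Set (E d)) : Set (E d) := {e | ∀ l ∈ L, pairE d e l = 0}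

/-- bilinear functor data `(F₀, F_a, F_b)` for `𝕍`. -/
structure BilinData where
  F0 : V₀ →ₗ[ℝ] V₀ →ₗ[ℝ] V₀
  Fa : V₀ →ₗ[ℝ] V₁ →ₗ[ℝ] V₁
  Fb : V₁ →ₗ[ℝ] V₀ →ₗ[ℝ] V₁
  ha : ∀ u n, d (Fa u n) = F0 u (d n)
  hb : ∀ m v, d (Fb m v) = F0 (d m) v
  hc : ∀ m n, Fa (d m) n = Fb m (d n)

/-- `ad_F (u,m) = ((F₀(u,·), F_a(u,·)), F_b(m,·))`. -/
def adF (F : BilinData d) (ξ : V₀ × V₁) : Gl d :=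
  (⟨(F.F0 ξ.1, F.Fa ξ.1), by
      rw [mem_End0]
      ext n
      exact (F.ha ξ.1 n).symm⟩, F.Fb ξ.2)

/-- the graph `G_F = {(ad_F ξ, ξ)}`. -/
def graphF (F : BilinData d) : Set (E d) := {e | ∃ ξ : V₀ × V₁, e = (adF d F ξ, ξ)}

/-- an isomorphism `μ = (μ₀, μ₁, μ₂)` from the Lie 2-algebra `gl(𝕍)` to itself. -/
structure GlIso where
  μ0 : (End0 d) ≃ₗ[ℝ] (End0 d)
  μ1 : (Gl d) ≃ₗ[ℝ] (Gl d)
  hs : ∀ X : Gl d, (μ1 X).1 = μ0 X.1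
  ht : ∀ X : Gl d, (μ1 X).1 + δm d (μ1 X).2 = μ0 (X.1 + δm d X.2)
  hid : ∀ A : End0 d, μ1 (A, 0) = (μ0 A, 0)
  hcomp : ∀ (A : End0 d) (φ φ' : V₀ →ₗ[ℝ] V₁),
    μ1 (A, φ + φ') = ((μ1 (A, φ)).1, (μ1 (A, φ)).2 + (μ1 (A + δm d φ, φ')).2)
  μ2 : (End0 d) →ₗ[ℝ] (End0 d) →ₗ[ℝ] Gl d
  hskew : ∀ A B, μ2 A B = - μ2 B A
  hs2 : ∀ A B, (μ2 A B).1 = μ0 (bkt0 d A B)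
  ht2 : ∀ A B, (μ2 A B).1 + δm d (μ2 A B).2 = bkt0 d (μ0 A) (μ0 B)
  hnat : ∀ (A B : End0 d) (φ ψ : V₀ →ₗ[ℝ] V₁),
    (μ2 A B).2 + (bkt d (μ1 (A, φ)) (μ1 (B, ψ))).2
      = (μ1 (bkt d (A, φ) (B, ψ))).2 + (μ2 (A + δm d φ) (B + δm d ψ)).2
  hcoh : ∀ A B C : End0 d,
    (μ2 (bkt0 d A B) C).2 + (bkt d (μ2 A B) ((μ0 C, 0) : Gl d)).2
      = (μ2 A (bkt0 d B C)).2 + (μ2 B (bkt0 d C A)).2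
        + (bkt d ((μ0 A, 0) : Gl d) (μ2 B C)).2
        + (bkt d ((μ0 B, 0) : Gl d) (μ2 C A)).2

/-- the `μ`-twisted pairing on `E`. -/
def pairμ (μ : GlIso d) (e₁ e₂ : E d) : V₀ × V₁ :=
  (2⁻¹ : ℝ) • (act d (μ.μ1 e₁.1) e₂.2 + act d (μ.μ1 e₂.1) e₁.2)

/-- the `μ`-twisted Courant bracket on `E`. -/
def courantμ (μ : GlIso d) (e₁ e₂ : E d) : E d :=
  (bkt d e₁.1 e₂.1, (2⁻¹ : ℝ) • (act d (μ.μ1 e₁.1) e₂.2 - act d (μ.μ1 e₂.1) e₁.2))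

/-- orthogonal complement w.r.t. the `μ`-twisted pairing. -/
def perpμ (μ : GlIso d) (L : Set (E d)) : Set (E d) := {e | ∀ l ∈ L, pairμ d μ e l = 0}

/-- the `μ`-twisted Dorfman bracket at the level of objects. -/
def dorfObjμ (μ : GlIso d) (x y : (End0 d) × V₀) : (End0 d) × V₀ :=
  (bkt0 d x.1 y.1, (μ.μ0 x.1).1.1 y.2)

end Omni

end

section Aux

open Omni

variable {V₀ V₁ : Type*}
  [AddCommGroup V₀] [Module ℝ V₀] [AddCommGroup V₁] [Module ℝ V₁]
variable (d : V₁ →ₗ[ℝ] V₀)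

lemma Gl.comm_d (X : Gl d) : ∀ m : V₁, X.1.1.1 (d m) = d (X.1.1.2 m) :=
  fun m => LinearMap.congr_fun X.1.2 m

lemma act_apply' (X : Gl d) (u : V₀) (m : V₁) :
    act d X (u, m) = (X.1.1.1 u, X.1.1.2 m + X.2 (u + d m)) := rfl

lemma act_bkt_apply (X Y : Gl d) (η : V₀ × V₁) :
    act d (bkt d X Y) η = act d X (act d Y η) - act d Y (act d X η) := by
  obtain ⟨u, m⟩ := η
  have hX := Gl.comm_d d X
  have hY := Gl.comm_d d Y
  simp only [act, bkt, bkt0, bktAφ, bktδ, LinearMap.sub_apply, LinearMap.add_apply,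
    LinearMap.comp_apply, Prod.mk_sub_mk, Prod.mk.injEq, map_add, map_sub, hX, hY]
  constructor <;> first | trivial | abel

lemma act_ext {X Y : Gl d} (h : ∀ η, act d X η = act d Y η) : X = Y := by
  have h0 : ∀ u, X.1.1.1 u = Y.1.1.1 u := fun u => congrArg Prod.fst (h (u, 0))
  have h2 : ∀ u, X.2 u = Y.2 u := by
    intro u
    have := congrArg Prod.snd (h (u, 0))
    simpa [act] using this
  have h1 : ∀ m, X.1.1.2 m = Y.1.1.2 m := by
    intro m
    have := congrArg Prod.snd (h (0, m))
    simp only [act_apply', zero_add, h2] at this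
    exact add_right_cancel this
  obtain ⟨⟨⟨X0, X1⟩, hXp⟩, φ⟩ := X
  obtain ⟨⟨⟨Y0, Y1⟩, hYp⟩, ψ⟩ := Y
  simp only [Prod.mk.injEq, Subtype.mk.injEq]
  exact ⟨⟨LinearMap.ext h0, LinearMap.ext h1⟩, LinearMap.ext h2⟩

lemma act_add_right (X : Gl d) (η θ : V₀ × V₁) :
    act d X (η + θ) = act d X η + act d X θ := by
  obtain ⟨u, m⟩ := η; obtain ⟨v, n⟩ := θ
  simp only [Prod.mk_add_mk, act_apply', map_add, Prod.mk.injEq]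
  constructor <;> first | trivial | abel

lemma act_sub_right (X : Gl d) (η θ : V₀ × V₁) :
    act d X (η - θ) = act d X η - act d X θ := by
  obtain ⟨u, m⟩ := η; obtain ⟨v, n⟩ := θ
  simp only [Prod.mk_sub_mk, act_apply', map_sub, map_add, Prod.mk.injEq]
  constructor <;> first | trivial | abel

lemma act_sub_left (X Y : Gl d) (η : V₀ × V₁) :
    act d (X - Y) η = act d X η - act d Y η := by
  obtain ⟨u, m⟩ := η
  simp only [act_apply', Prod.fst_sub, Prod.snd_sub, Submodule.coe_sub,
    LinearMap.sub_apply, Prod.mk_sub_mk, Prod.mk.injEq]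
  constructor <;> first | trivial | abel

lemma adF_sub (F : BilinData d) (ξ η : V₀ × V₁) :
    adF d F (ξ - η) = adF d F ξ - adF d F η := by
  apply Prod.ext
  · apply Subtype.ext
    simp [adF, map_sub, Prod.ext_iff]
  · simp [adF, map_sub]

lemma adF_act_apply (F : BilinData d) (u v : V₀) (m n : V₁) :
    act d (adF d F (u, m)) (v, n) = (F.F0 u v, F.Fa u n + F.Fb m (v + d n)) := rfl

lemma act_zeroφ (φ : V₀ →ₗ[ℝ] V₁) (u : V₀) (m : V₁) :
    act d (((0 : End0 d), φ) : Gl d) (u, m) = (0, φ (u + d m)) := by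
  simp [act_apply']

lemma act_δφ (φ : V₀ →ₗ[ℝ] V₁) (u : V₀) (m : V₁) :
    act d ((δm d φ, (0 : V₀ →ₗ[ℝ] V₁)) : Gl d) (u, m) = (d (φ u), φ (d m)) := by
  simp [act_apply', δm]

/-- membership in `NG` is equivalent to the bracket compatibility condition. -/
lemma mem_NG_iff_bkt (F : BilinData d) (N : Gl d) :
    (∀ l ∈ graphF d F, dorfman d ((N, (0 : V₀ × V₁)) : E d) l ∈ graphF d F) ↔
      ∀ ξ : V₀ × V₁, bkt d N (adF d F ξ) = adF d F (act d N ξ) := by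
  constructor
  · intro h ξ
    obtain ⟨ζ, hζ⟩ := h (adF d F ξ, ξ) ⟨ξ, rfl⟩
    simp only [dorfman, Prod.mk.injEq] at hζ
    obtain ⟨h1, h2⟩ := hζ
    rw [h1, ← h2]
  · intro h l hl
    obtain ⟨ξ, rfl⟩ := hl
    exact ⟨act d N ξ, by simp [dorfman, h ξ]⟩

/-- bracket compatibility is equivalent to the derivation property. -/
lemma bkt_iff_der (F : BilinData d) (N : Gl d) :
    (∀ ξ : V₀ × V₁, bkt d N (adF d F ξ) = adF d F (act d N ξ)) ↔
      ∀ ξ η : V₀ × V₁,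
        act d N (act d (adF d F ξ) η)
          = act d (adF d F (act d N ξ)) η + act d (adF d F ξ) (act d N η) := by
  constructor
  · intro h ξ η
    have := congrArg (fun X => act d X η) (h ξ)
    rw [act_bkt_apply] at this
    rw [← this]
    abel
  · intro h ξ
    apply act_ext d
    intro η
    rw [act_bkt_apply, h ξ η]
    abel

end Aux

open Omni in
/-- For a strict Lie 2-algebra structure on `𝕍` given by skew-symmetric bilinear functor
data `F` satisfying the Jacobi identity, with bracket `[ξ,η] = ad_F(ξ)·η` and Dirac
structure `G_ad` the graph of `ad_F`, the normalizer `N_{G_ad}` is a sub-Lie 2-algebra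
of `gl(𝕍)`, and `N ∈ N_{G_ad}` iff `N` is a derivation of the bracket. -/
theorem normalizer_of_graph_is_derivations {V₀ V₁ : Type*} [AddCommGroup V₀] [Module ℝ V₀] [AddCommGroup V₁] [Module ℝ V₁]
    [FiniteDimensional ℝ V₀] [FiniteDimensional ℝ V₁]
    (d : V₁ →ₗ[ℝ] V₀)
    (F : BilinData d)
    (hFskew : (∀ u v : V₀, F.F0 u v = - F.F0 v u) ∧
      (∀ (u : V₀) (n : V₁), F.Fa u n = - F.Fb n u))
    (hFjac : ∀ ξ η θ : V₀ × V₁,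
      act d (adF d F ξ) (act d (adF d F η) θ)
        = act d (adF d F (act d (adF d F ξ) η)) θ
          + act d (adF d F η) (act d (adF d F ξ) θ))
    (NG : Set (Gl d))
    (hNG : NG = {N : Gl d |
      ∀ l ∈ graphF d F, dorfman d ((N, (0 : V₀ × V₁)) : E d) l ∈ graphF d F}) :
    -- N_{G_ad} is a sub-Lie 2-algebra of gl(𝕍)
    (∀ φ : V₀ →ₗ[ℝ] V₁, (((0 : End0 d), φ) : Gl d) ∈ NG →
      ((δm d φ, (0 : V₀ →ₗ[ℝ] V₁)) : Gl d) ∈ NG) ∧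
    (∀ N ∈ NG, ∀ N' ∈ NG, bkt d N N' ∈ NG) ∧
    -- N ∈ N_{G_ad} iff N is a derivation of the bracket
    (∀ N : Gl d, N ∈ NG ↔
      ∀ ξ η : V₀ × V₁,
        act d N (act d (adF d F ξ) η)
          = act d (adF d F (act d N ξ)) η + act d (adF d F ξ) (act d N η)) := by
  have hchar : ∀ N : Gl d, N ∈ NG ↔
      ∀ ξ η : V₀ × V₁,
        act d N (act d (adF d F ξ) η)
          = act d (adF d F (act d N ξ)) η + act d (adF d F ξ) (act d N η) := by
    intro N
    rw [hNG, Set.mem_setOf_eq, mem_NG_iff_bkt, bkt_iff_der]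
  refine ⟨?_, ?_, hchar⟩
  · -- part 1: δφ is in the normalizer whenever (0, φ) is
    intro φ hφ
    rw [hchar] at hφ ⊢
    have I1 : ∀ u v, φ (F.F0 u v) = F.Fb (φ u) v + F.Fa u (φ v) := by
      intro u v
      have h := congrArg Prod.snd (hφ (u, 0) (v, 0))
      simpa [adF_act_apply, act_zeroφ] using h
    rintro ⟨u, m⟩ ⟨v, n⟩
    simp only [adF_act_apply, act_δφ, Prod.mk_add_mk, Prod.mk.injEq, map_add,
      I1, F.ha, F.hb, F.hc]
    constructor <;> first | trivial | abel
  · -- part 2: the normalizer is closed under the bracket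
    intro N hN N' hN'
    rw [hchar] at hN hN' ⊢
    intro ξ η
    rw [act_bkt_apply, hN ξ η, hN' ξ η, act_add_right, act_add_right,
      hN (act d N' ξ) η, hN ξ (act d N' η), hN' (act d N ξ) η, hN' ξ (act d N η),
      act_bkt_apply, act_bkt_apply, adF_sub, act_sub_left, act_sub_right]
    abel
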